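/- Let Φ, φ, N, H, t, s be as in the higher-dimensional setting, and suppose ∂φ/∂s + (n−1)Hφ is constant on each hypersurface Γ_t, so that it defines a function c(t) of t alone. If u : (−ε, ε) → ℝ is a C² solution of (log u')' = c(t) with u' > 0, then U = u ∘ t is harmonic and critical-point-free on Ω with level-set family {Γ_t}. -/

import Mathlib

set_option maxHeartbeats 2000000

open scoped InnerProductSpace

/-- The Laplacian of `f` at `p`. -/
noncomputable def lap {n : ℕ} (f : EuclideanSpace ℝ (Fin n) → ℝ)
    (p : EuclideanSpace ℝ (Fin n)) : ℝ :=
  ∑ i : Fin n,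
    ⟪fderiv ℝ (gradient f) p (EuclideanSpace.single i 1), EuclideanSpace.single i (1:ℝ)⟫_ℝ

/-- `∂Φ/∂x_j`, the coordinate tangent vectors of the hypersurfaces `Γ_t : x ↦ Φ(x, t)`. -/
noncomputable def Pd {m : ℕ} (Φ : EuclideanSpace ℝ (Fin m) × ℝ → EuclideanSpace ℝ (Fin (m + 1)))
    (q : EuclideanSpace ℝ (Fin m) × ℝ) (j : Fin m) : EuclideanSpace ℝ (Fin (m + 1)) :=
  fderiv ℝ Φ q (EuclideanSpace.single j 1, 0)

/-- `∂Φ/∂t`. -/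
noncomputable def Pt {m : ℕ} (Φ : EuclideanSpace ℝ (Fin m) × ℝ → EuclideanSpace ℝ (Fin (m + 1)))
    (q : EuclideanSpace ℝ (Fin m) × ℝ) : EuclideanSpace ℝ (Fin (m + 1)) :=
  fderiv ℝ Φ q (0, 1)

/-- The determinant of the square matrix whose first `m` columns are the coordinate
tangent vectors `∂Φ/∂x_j` and whose last column is `w`.  With `w = ∂Φ/∂t` this is
`det dΦ`; as a function of `w` it is `⟪n, w⟫` for the Hodge-dual normal `n` of
`(∂Φ/∂x₁) ∧ ⋯ ∧ (∂Φ/∂x_m)`. -/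
noncomputable def detWith {m : ℕ}
    (Φ : EuclideanSpace ℝ (Fin m) × ℝ → EuclideanSpace ℝ (Fin (m + 1)))
    (q : EuclideanSpace ℝ (Fin m) × ℝ) (w : EuclideanSpace ℝ (Fin (m + 1))) : ℝ :=
  Matrix.det (Matrix.of fun i j : Fin (m + 1) =>
    (Fin.snoc (fun j' : Fin m => Pd Φ q j') w :
      Fin (m + 1) → EuclideanSpace ℝ (Fin (m + 1))) j i)

/-- `det dΦ`, the Jacobian determinant of `Φ`. -/
noncomputable def detJn {m : ℕ}
    (Φ : EuclideanSpace ℝ (Fin m) × ℝ → EuclideanSpace ℝ (Fin (m + 1)))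
    (q : EuclideanSpace ℝ (Fin m) × ℝ) : ℝ :=
  detWith Φ q (Pt Φ q)

section Aux

variable {k : ℕ}

/-- Sums of `⟪A (b i), b i⟫` over two orthonormal bases agree (the trace). -/
theorem trace_sum_eq {ι ι' : Type*} [Fintype ι] [Fintype ι']
    (A : EuclideanSpace ℝ (Fin k) →L[ℝ] EuclideanSpace ℝ (Fin k))
    (v : OrthonormalBasis ι ℝ (EuclideanSpace ℝ (Fin k)))
    (w : OrthonormalBasis ι' ℝ (EuclideanSpace ℝ (Fin k))) :
    ∑ i, ⟪A (w i), w i⟫_ℝ = ∑ j, ⟪A (v j), v j⟫_ℝ := by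
  calc ∑ i, ⟪A (w i), w i⟫_ℝ
      = ∑ i, ∑ j, ⟪A (w i), v j⟫_ℝ * ⟪v j, w i⟫_ℝ := by
        exact Finset.sum_congr rfl fun i _ => (v.sum_inner_mul_inner _ _).symm
    _ = ∑ i, ∑ j, ⟪v j, w i⟫_ℝ * ⟪w i, (ContinuousLinearMap.adjoint A) (v j)⟫_ℝ := by
        refine Finset.sum_congr rfl fun i _ => Finset.sum_congr rfl fun j _ => ?_
        rw [ContinuousLinearMap.adjoint_inner_right]; ring
    _ = ∑ j, ∑ i, ⟪v j, w i⟫_ℝ * ⟪w i, (ContinuousLinearMap.adjoint A) (v j)⟫_ℝ :=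
        Finset.sum_comm
    _ = ∑ j, ⟪v j, (ContinuousLinearMap.adjoint A) (v j)⟫_ℝ :=
        Finset.sum_congr rfl fun j _ => w.sum_inner_mul_inner _ _
    _ = ∑ j, ⟪A (v j), v j⟫_ℝ :=
        Finset.sum_congr rfl fun j _ => ContinuousLinearMap.adjoint_inner_right _ _ _

theorem inner_gradient_apply (f : EuclideanSpace ℝ (Fin k) → ℝ) (y w : EuclideanSpace ℝ (Fin k)) :
    ⟪gradient f y, w⟫_ℝ = fderiv ℝ f y w := by
  simp only [gradient]
  rw [← InnerProductSpace.toDual_apply_apply, LinearIsometryEquiv.apply_symm_apply]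

end Aux

theorem stmt15 (m : ℕ) (hm : 1 ≤ m) (ε : ℝ) (hε : 0 < ε)
    (S : Set (EuclideanSpace ℝ (Fin m) × ℝ)) (hS : S = Set.univ ×ˢ Set.Ioo (-ε) ε)
    (Φ : EuclideanSpace ℝ (Fin m) × ℝ → EuclideanSpace ℝ (Fin (m + 1)))
    (hΦ : ContDiffOn ℝ 2 Φ S) (hinj : Set.InjOn Φ S)
    (Ω : Set (EuclideanSpace ℝ (Fin (m + 1)))) (hΩ : Ω = Φ '' S) (hΩopen : IsOpen Ω)
    (hdet : ∀ q ∈ S, 0 < detJn Φ q)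
    -- nv is the Hodge dual of (∂Φ/∂x₁) ∧ ⋯ ∧ (∂Φ/∂x_m)
    (nv : EuclideanSpace ℝ (Fin m) × ℝ → EuclideanSpace ℝ (Fin (m + 1)))
    (hnv : ∀ q ∈ S, ∀ w, ⟪nv q, w⟫_ℝ = detWith Φ q w)
    -- N = n/‖n‖ as a unit normal field on Ω
    (N : EuclideanSpace ℝ (Fin (m + 1)) → EuclideanSpace ℝ (Fin (m + 1)))
    (hN : ∀ q ∈ S, N (Φ q) = ‖nv q‖⁻¹ • nv q)
    -- φ = det dΦ/‖n‖ as a function on Ω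
    (φ : EuclideanSpace ℝ (Fin (m + 1)) → ℝ)
    (hφ : ∀ q ∈ S, φ (Φ q) = detJn Φ q / ‖nv q‖)
    -- t : Ω → (−ε, ε) is the last component of Φ⁻¹
    (t : EuclideanSpace ℝ (Fin (m + 1)) → ℝ) (ht : ∀ q ∈ S, t (Φ q) = q.2)
    -- H is the mean curvature of the Γ_t with respect to N: minus the averaged
    -- tangential trace of the derivative of the unit normal field N
    (H : EuclideanSpace ℝ (Fin (m + 1)) → ℝ)
    (hH : ∀ p ∈ Ω, ∀ b : Fin m → EuclideanSpace ℝ (Fin (m + 1)),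
      Orthonormal ℝ b → (∀ i, ⟪b i, N p⟫_ℝ = 0) →
      H p = -(∑ i, ⟪fderiv ℝ N p (b i), b i⟫_ℝ) / m)
    -- ∂φ/∂s is the derivative of φ along unit-speed integral curves of N
    (dφds : EuclideanSpace ℝ (Fin (m + 1)) → ℝ)
    (hdφds : ∀ p ∈ Ω, ∀ α : ℝ → EuclideanSpace ℝ (Fin (m + 1)), α 0 = p →
      (∀ᶠ s in nhds 0, α s ∈ Ω ∧ HasDerivAt α (N (α s)) s) →
      HasDerivAt (fun s => φ (α s)) (dφds p) 0)
    -- ∂φ/∂s + (n−1)Hφ is constant on each Γ_t, defining a function c of t alone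
    (c : ℝ → ℝ)
    (hconst : ∀ τ ∈ Set.Ioo (-ε) ε, ∀ x : EuclideanSpace ℝ (Fin m),
      dφds (Φ (x, τ)) + m * H (Φ (x, τ)) * φ (Φ (x, τ)) = c τ)
    -- u is a C² solution of (log u')' = c with u' > 0
    (u : ℝ → ℝ) (hu : ContDiff ℝ 2 u)
    (hu' : ∀ τ ∈ Set.Ioo (-ε) ε, 0 < deriv u τ)
    (hODE : ∀ τ ∈ Set.Ioo (-ε) ε,
      HasDerivAt (fun ξ => Real.log (deriv u ξ)) (c τ) τ) :
    (∀ p ∈ Ω, lap (fun y => u (t y)) p = 0) ∧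
    (∀ p ∈ Ω, gradient (fun y => u (t y)) p ≠ 0) ∧
    (∀ τ ∈ Set.Ioo (-ε) ε, ∃ k : ℝ,
      {p ∈ Ω | u (t p) = k} = (fun x => Φ (x, τ)) '' Set.univ) ∧
    (∀ k : ℝ, {p ∈ Ω | u (t p) = k}.Nonempty → ∃ τ ∈ Set.Ioo (-ε) ε,
      {p ∈ Ω | u (t p) = k} = (fun x => Φ (x, τ)) '' Set.univ) := by
  classical
  have hSopen : IsOpen S := by rw [hS]; exact isOpen_univ.prod isOpen_Ioo
  have hmR : (m : ℝ) ≠ 0 := Nat.cast_ne_zero.mpr (by omega)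
  -- The fundamental per-point facts.
  have key : ∀ q ∈ S, ContDiffAt ℝ 2 t (Φ q) ∧ gradient t (Φ q) ≠ 0 ∧
      φ (Φ q) = ‖gradient t (Φ q)‖⁻¹ ∧
      N (Φ q) = ‖gradient t (Φ q)‖⁻¹ • gradient t (Φ q) ∧
      t (Φ q) ∈ Set.Ioo (-ε) ε := by
    intro q hq
    have hΦq : ContDiffAt ℝ 2 Φ q := hΦ.contDiffAt (hSopen.mem_nhds hq)
    set L : (EuclideanSpace ℝ (Fin m) × ℝ) →L[ℝ] EuclideanSpace ℝ (Fin (m + 1)) :=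
      fderiv ℝ Φ q with hLdef
    have hfd : HasFDerivAt Φ L q := (hΦq.differentiableAt (by norm_num)).hasFDerivAt
    set B : Fin (m + 1) → EuclideanSpace ℝ (Fin m) × ℝ :=
      Fin.snoc (fun j : Fin m => (EuclideanSpace.single j 1, (0 : ℝ))) (0, 1) with hBdef
    have hLBc : ∀ i : Fin m, L (B i.castSucc) = Pd Φ q i := by
      intro i
      rw [hBdef]
      rw [Fin.snoc_castSucc]
      rfl
    have hLBl : L (B (Fin.last m)) = Pt Φ q := by
      rw [hBdef, Fin.snoc_last]; rfl
    have hLB : ∀ j, (Fin.snoc (Pd Φ q) (Pt Φ q) : Fin (m + 1) → EuclideanSpace ℝ (Fin (m + 1))) j = L (B j) := by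
      intro j
      refine Fin.lastCases ?_ (fun i => ?_) j
      · rw [Fin.snoc_last, hLBl]
      · rw [Fin.snoc_castSucc, hLBc]
    set bE := EuclideanSpace.basisFun (Fin (m + 1)) ℝ with hbE
    have hmat : detJn Φ q = bE.toBasis.det (fun j => L (B j)) := by
      rw [Module.Basis.det_apply]
      show Matrix.det _ = Matrix.det _
      congr 1
      ext i j
      rw [Module.Basis.toMatrix_apply, OrthonormalBasis.coe_toBasis_repr_apply,
        EuclideanSpace.basisFun_repr, Matrix.of_apply, ← hLB]
    have hdetu : IsUnit (bE.toBasis.det fun j => L (B j)) := by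
      rw [← hmat]; exact isUnit_iff_ne_zero.mpr (ne_of_gt (hdet q hq))
    obtain ⟨hli, hspan⟩ := (Module.Basis.is_basis_iff_det bE.toBasis).mpr hdetu
    have hsurj : Function.Surjective L := by
      have hr : LinearMap.range (L : (EuclideanSpace ℝ (Fin m) × ℝ) →ₗ[ℝ]
          EuclideanSpace ℝ (Fin (m + 1))) = ⊤ := by
        rw [← top_le_iff, ← hspan, Submodule.span_le]
        rintro z ⟨j, rfl⟩
        exact ⟨B j, rfl⟩
      exact LinearMap.range_eq_top.mp hr
    have hfinD : Module.finrank ℝ (EuclideanSpace ℝ (Fin m) × ℝ) = m + 1 := by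
      rw [Module.finrank_prod, finrank_euclideanSpace_fin, Module.finrank_self]
    have hinjL : Function.Injective L := by
      have := (LinearMap.injective_iff_surjective_of_finrank_eq_finrank
        (f := (L : (EuclideanSpace ℝ (Fin m) × ℝ) →ₗ[ℝ] EuclideanSpace ℝ (Fin (m + 1))))
        (by rw [hfinD, finrank_euclideanSpace_fin])).mpr hsurj
      exact this
    set Leq := LinearEquiv.ofBijective
      (L : (EuclideanSpace ℝ (Fin m) × ℝ) →ₗ[ℝ] EuclideanSpace ℝ (Fin (m + 1)))
      ⟨hinjL, hsurj⟩ with hLeq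
    set L' := Leq.toContinuousLinearEquiv with hL'
    have hcoe : (L' : (EuclideanSpace ℝ (Fin m) × ℝ) →L[ℝ] EuclideanSpace ℝ (Fin (m + 1))) = L := by
      apply ContinuousLinearMap.ext
      intro v
      rfl
    have hfd' : HasFDerivAt Φ
        (L' : (EuclideanSpace ℝ (Fin m) × ℝ) →L[ℝ] EuclideanSpace ℝ (Fin (m + 1))) q := by
      rw [hcoe]; exact hfd
    have hn2 : (2 : WithTop ℕ∞) ≠ 0 := two_ne_zero
    set Ψ := hΦq.localInverse hfd' hn2 with hΨdef
    have hΨcd : ContDiffAt ℝ 2 Ψ (Φ q) := hΦq.to_localInverse hfd' hn2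
    have hstrict : HasStrictFDerivAt Φ
        (L' : (EuclideanSpace ℝ (Fin m) × ℝ) →L[ℝ] EuclideanSpace ℝ (Fin (m + 1))) q :=
      hΦq.hasStrictFDerivAt' hfd' hn2
    have hΨp : Ψ (Φ q) = q := hΦq.localInverse_apply_image hfd' hn2
    have hrinv : ∀ᶠ y in nhds (Φ q), Φ (Ψ y) = y := hstrict.eventually_right_inverse
    have hΨcont : ContinuousAt Ψ (Φ q) := hstrict.localInverse_continuousAt
    have hΨfd : HasFDerivAt Ψ
        ((L'.symm : EuclideanSpace ℝ (Fin (m + 1)) →L[ℝ] EuclideanSpace ℝ (Fin m) × ℝ)) (Φ q) :=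
      hstrict.to_localInverse.hasFDerivAt
    have hmemS : ∀ᶠ y in nhds (Φ q), Ψ y ∈ S :=
      hΨcont.eventually_mem (by rw [hΨp]; exact hSopen.mem_nhds hq)
    have ht_loc : t =ᶠ[nhds (Φ q)] fun y => (Ψ y).2 := by
      filter_upwards [hmemS, hrinv] with y h1 h2
      conv_lhs => rw [← h2]
      exact ht _ h1
    have hcdt : ContDiffAt ℝ 2 t (Φ q) :=
      ((contDiff_snd.contDiffAt).comp _ hΨcd).congr_of_eventuallyEq ht_loc
    set dtc := (ContinuousLinearMap.snd ℝ (EuclideanSpace ℝ (Fin m)) ℝ).comp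
      (L'.symm : EuclideanSpace ℝ (Fin (m + 1)) →L[ℝ] EuclideanSpace ℝ (Fin m) × ℝ) with hdtc
    have hfdt : HasFDerivAt t dtc (Φ q) :=
      (((ContinuousLinearMap.snd ℝ (EuclideanSpace ℝ (Fin m)) ℝ).hasFDerivAt).comp _
        hΨfd).congr_of_eventuallyEq ht_loc
    have hdt_apply : ∀ w, fderiv ℝ t (Φ q) w = dtc w := by
      rw [hfdt.fderiv]; exact fun _ => rfl
    have hdtL : ∀ j, dtc (L (B j)) = (B j).2 := by
      intro j
      have h1 : L (B j) = L' (B j) := by rw [← hcoe]; rfl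
      rw [h1]
      show (L'.symm (L' (B j))).2 = (B j).2
      rw [ContinuousLinearEquiv.symm_apply_apply]
    have hgB : ∀ j, ⟪gradient t (Φ q), L (B j)⟫_ℝ = (B j).2 := by
      intro j; rw [inner_gradient_apply, hdt_apply, hdtL]
    have hB2c : ∀ i : Fin m, (B i.castSucc).2 = 0 := by
      intro i; rw [hBdef, Fin.snoc_castSucc]
    have hB2l : (B (Fin.last m)).2 = 1 := by rw [hBdef, Fin.snoc_last]
    set gt := gradient t (Φ q) with hgt
    have hPd0 : ∀ j : Fin m, ⟪nv q, Pd Φ q j⟫_ℝ = 0 := by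
      intro j
      rw [hnv q hq]
      show Matrix.det _ = 0
      refine Matrix.det_zero_of_column_eq (i := j.castSucc) (j := Fin.last m)
        (Fin.castSucc_lt_last j).ne ?_
      intro k
      simp [Fin.snoc_castSucc, Fin.snoc_last]
    have hPdt : ⟪nv q, Pt Φ q⟫_ℝ = detJn Φ q := by
      rw [hnv q hq]; rfl
    have hw0B : ∀ j, ⟪nv q - detJn Φ q • gt, L (B j)⟫_ℝ = 0 := by
      intro j
      rw [inner_sub_left, real_inner_smul_left, hgB]
      refine Fin.lastCases ?_ (fun i => ?_) j
      · rw [hB2l, hLBl, hPdt]; ring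
      · rw [hB2c, hLBc, hPd0]; ring
    have hw0z : nv q - detJn Φ q • gt = 0 := by
      have hall : ∀ z, ⟪nv q - detJn Φ q • gt, z⟫_ℝ = 0 := by
        intro z
        have hz : z ∈ Submodule.span ℝ (Set.range fun j => L (B j)) := by
          rw [hspan]; trivial
        induction hz using Submodule.span_induction with
        | mem x hx => obtain ⟨j, rfl⟩ := hx; exact hw0B j
        | zero => simp
        | add x y _ _ hx hy => rw [inner_add_right, hx, hy]; ring
        | smul a x _ hx => rw [real_inner_smul_right, hx]; ring
      exact inner_self_eq_zero.mp (hall _)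
    have hnveq : nv q = detJn Φ q • gt := sub_eq_zero.mp hw0z
    have hgtPt : ⟪gt, Pt Φ q⟫_ℝ = 1 := by
      rw [← hB2l, ← hLBl]; exact hgB _
    have hgt0 : gt ≠ 0 := by
      intro h
      rw [h, inner_zero_left] at hgtPt
      exact one_ne_zero hgtPt.symm
    have hdq : 0 < detJn Φ q := hdet q hq
    have hnvnorm : ‖nv q‖ = detJn Φ q * ‖gt‖ := by
      rw [hnveq, norm_smul, Real.norm_eq_abs, abs_of_pos hdq]
    have hgtn : ‖gt‖ ≠ 0 := norm_ne_zero_iff.mpr hgt0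
    refine ⟨hcdt, hgt0, ?_, ?_, ?_⟩
    · rw [hφ q hq, hnvnorm]
      field_simp
    · rw [hN q hq, hnvnorm, hnveq, smul_smul]
      congr 1
      field_simp
    · rw [ht q hq]
      rw [hS] at hq
      exact hq.2
  have keyΩ : ∀ p ∈ Ω, ContDiffAt ℝ 2 t p ∧ gradient t p ≠ 0 ∧
      φ p = ‖gradient t p‖⁻¹ ∧ N p = ‖gradient t p‖⁻¹ • gradient t p ∧
      t p ∈ Set.Ioo (-ε) ε := by
    intro p hp
    rw [hΩ] at hp
    obtain ⟨q, hq, rfl⟩ := hp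
    exact key q hq
  have hudiff : Differentiable ℝ u := hu.differentiable (by norm_num)
  have hgradcomp : ∀ p ∈ Ω, gradient (fun y => u (t y)) p = deriv u (t p) • gradient t p := by
    intro p hp
    have h2 : HasFDerivAt t (fderiv ℝ t p) p :=
      (((keyΩ p hp).1).differentiableAt (by norm_num)).hasFDerivAt
    have h1 : HasDerivAt u (deriv u (t p)) (t p) := (hudiff (t p)).hasDerivAt
    have h3 : HasFDerivAt (fun y => u (t y)) (deriv u (t p) • fderiv ℝ t p) p :=
      h1.comp_hasFDerivAt p h2
    simp only [gradient]
    rw [h3.fderiv, map_smul]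
  -- Part 2
  have part2 : ∀ p ∈ Ω, gradient (fun y => u (t y)) p ≠ 0 := by
    intro p hp
    obtain ⟨hc, hg0, hφp, hNp, htp⟩ := keyΩ p hp
    rw [hgradcomp p hp]
    exact smul_ne_zero (ne_of_gt (hu' _ htp)) hg0
  -- Strict monotonicity of u
  have humono : StrictMonoOn u (Set.Ioo (-ε) ε) :=
    strictMonoOn_of_deriv_pos (convex_Ioo _ _) (hu.continuous.continuousOn)
      (by rw [interior_Ioo]; exact fun τ hτ => hu' τ hτ)
  -- Level set description
  have level : ∀ τ ∈ Set.Ioo (-ε) ε,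
      {p ∈ Ω | u (t p) = u τ} = (fun x => Φ (x, τ)) '' Set.univ := by
    intro τ hτ
    ext p
    simp only [Set.mem_setOf_eq, Set.mem_image, Set.mem_univ, true_and]
    constructor
    · rintro ⟨hpΩ, hk⟩
      rw [hΩ] at hpΩ
      obtain ⟨⟨x, τ'⟩, hqS, rfl⟩ := hpΩ
      have hτ' : τ' ∈ Set.Ioo (-ε) ε := by rw [hS] at hqS; exact hqS.2
      have htp : t (Φ (x, τ')) = τ' := ht _ hqS
      rw [htp] at hk
      have hττ : τ' = τ := humono.injOn hτ' hτ hk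
      exact ⟨x, by rw [← hττ]⟩
    · rintro ⟨x, rfl⟩
      have hqS : (x, τ) ∈ S := by rw [hS]; exact ⟨Set.mem_univ x, hτ⟩
      exact ⟨by rw [hΩ]; exact ⟨(x, τ), hqS, rfl⟩, by rw [ht _ hqS]⟩
  -- Part 1 : harmonicity
  have part1 : ∀ p ∈ Ω, lap (fun y => u (t y)) p = 0 := by
    intro p hp
    obtain ⟨hcdt, hg0, hφp, hNp, htIoo⟩ := keyΩ p hp
    obtain ⟨q, hq, hpq⟩ : ∃ q, q ∈ S ∧ Φ q = p := by rw [hΩ] at hp; exact hp.imp fun q h => ⟨h.1, h.2⟩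
    set τ₀ := t p with hτ₀
    set gp := gradient t p with hgp
    set r := ‖gp‖ with hr
    have hrpos : 0 < r := norm_pos_iff.mpr hg0
    have hrne : r ≠ 0 := hrpos.ne'
    set ν := N p with hν
    have hνeq : ν = r⁻¹ • gp := hNp
    have hνnorm : ‖ν‖ = 1 := by
      rw [hνeq, norm_smul, Real.norm_eq_abs, abs_of_pos (inv_pos.mpr hrpos),
        inv_mul_cancel₀ hrne]
    set u1 := deriv u τ₀ with hu1
    set u2 := deriv (deriv u) τ₀ with hu2
    have hu1pos : 0 < u1 := hu' τ₀ htIoo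
    -- u'' = c τ₀ * u'
    have hderiv_cd : ContDiff ℝ 1 (deriv u) := by
      have h2 : (2 : WithTop ℕ∞) = 1 + 1 := by norm_num
      rw [h2] at hu
      exact (contDiff_succ_iff_deriv.mp hu).2.2
    have hu2d : HasDerivAt (deriv u) u2 τ₀ :=
      ((hderiv_cd.differentiable one_ne_zero) τ₀).hasDerivAt
    have hlog : HasDerivAt (fun ξ => Real.log (deriv u ξ)) (u2 / u1) τ₀ :=
      hu2d.log (ne_of_gt hu1pos)
    have hu2eq : u2 = c τ₀ * u1 := by
      have huni : c τ₀ = u2 / u1 := (hODE τ₀ htIoo).unique hlog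
      rw [huni]
      field_simp
    have evΩ : ∀ᶠ y in nhds p, y ∈ Ω := hΩopen.mem_nhds hp
    -- C¹ facts about the gradient field
    have hgC1 : ContDiffAt ℝ 1 (fun y => gradient t y) p := by
      have h1 : ContDiffAt ℝ 1 (fderiv ℝ t) p := hcdt.fderiv_right (by norm_num)
      have h2 : ContDiffAt ℝ 1
          (fun d : EuclideanSpace ℝ (Fin (m + 1)) →L[ℝ] ℝ =>
            (InnerProductSpace.toDual ℝ (EuclideanSpace ℝ (Fin (m + 1)))).symm d)
          (fderiv ℝ t p) :=
        ((InnerProductSpace.toDual ℝ (EuclideanSpace ℝ (Fin (m + 1)))).symm.contDiff).contDiffAt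
      exact (h2.comp p h1 : _)
    have hnormC1 : ContDiffAt ℝ 1 (fun y => ‖gradient t y‖) p := hgC1.norm ℝ hg0
    have hψC1 : ContDiffAt ℝ 1 (fun y => ‖gradient t y‖⁻¹) p := hnormC1.inv hrne
    have hNev : N =ᶠ[nhds p] fun y => ‖gradient t y‖⁻¹ • gradient t y := by
      filter_upwards [evΩ] with y hy
      exact (keyΩ y hy).2.2.2.1
    have hNC1 : ContDiffAt ℝ 1 N p := (hψC1.smul hgC1).congr_of_eventuallyEq hNev
    set DN := fderiv ℝ N p with hDN
    have hNfd : HasFDerivAt N DN p := (hNC1.differentiableAt one_ne_zero).hasFDerivAt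
    have htfd : HasFDerivAt t (fderiv ℝ t p) p :=
      (hcdt.differentiableAt (by norm_num)).hasFDerivAt
    have hdtν : fderiv ℝ t p ν = r := by
      rw [← inner_gradient_apply, hνeq, real_inner_smul_right,
        real_inner_self_eq_norm_mul_norm]
      rw [← hgp, ← hr]
      field_simp
    have hD1 : HasFDerivAt (fun y => deriv u (t y)) (u2 • fderiv ℝ t p) p :=
      hu2d.comp_hasFDerivAt p htfd
    set D2 := fderiv ℝ (fun y => ‖gradient t y‖) p with hD2def
    have hD2 : HasFDerivAt (fun y => ‖gradient t y‖) D2 p :=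
      (hnormC1.differentiableAt one_ne_zero).hasFDerivAt
    set Dψ := fderiv ℝ (fun y => ‖gradient t y‖⁻¹) p with hDψdef
    have hDψ : HasFDerivAt (fun y => ‖gradient t y‖⁻¹) Dψ p :=
      (hψC1.differentiableAt one_ne_zero).hasFDerivAt
    -- relation between D2 and Dψ
    have hprod : HasFDerivAt (fun y => ‖gradient t y‖ * ‖gradient t y‖⁻¹)
        (r • Dψ + r⁻¹ • D2) p := hD2.mul hDψ
    have hprodev : (fun _ : EuclideanSpace ℝ (Fin (m + 1)) => (1 : ℝ)) =ᶠ[nhds p]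
        fun y => ‖gradient t y‖ * ‖gradient t y‖⁻¹ := by
      filter_upwards [evΩ] with y hy
      have hgy : gradient t y ≠ 0 := (keyΩ y hy).2.1
      have : ‖gradient t y‖ ≠ 0 := norm_ne_zero_iff.mpr hgy
      field_simp
    have hzero : r • Dψ + r⁻¹ • D2 = (0 : EuclideanSpace ℝ (Fin (m + 1)) →L[ℝ] ℝ) :=
      (hprod.congr_of_eventuallyEq hprodev).unique (hasFDerivAt_const 1 p)
    have hD2Dψ : D2 ν = -(r ^ 2) * Dψ ν := by
      have h1 := congrArg (fun (A : EuclideanSpace ℝ (Fin (m + 1)) →L[ℝ] ℝ) => A ν) hzero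
      simp only [ContinuousLinearMap.add_apply, ContinuousLinearMap.coe_smul',
        Pi.smul_apply, smul_eq_mul, ContinuousLinearMap.zero_apply] at h1
      have h2 : r * (r * Dψ ν + r⁻¹ * D2 ν) = r * 0 := by rw [h1]
      rw [mul_zero, mul_add, ← mul_assoc, ← mul_assoc, mul_inv_cancel₀ hrne, one_mul] at h2
      nlinarith [h2]
    -- dφds p = Dψ ν via an integral curve
    obtain ⟨α, hα0, ε', hε', hαd⟩ := hNC1.exists_forall_mem_closedBall_exists_eq_forall_mem_Ioo_hasDerivAt₀ 0
    have h0mem : (0 : ℝ) ∈ Set.Ioo (0 - ε') (0 + ε') := by constructor <;> linarith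
    have hαc : ContinuousAt α 0 := (hαd 0 h0mem).continuousAt
    have hαΩ : ∀ᶠ s in nhds (0 : ℝ), α s ∈ Ω :=
      hαc.eventually_mem (by rw [hα0]; exact hΩopen.mem_nhds hp)
    have hαev : ∀ᶠ s in nhds (0 : ℝ), α s ∈ Ω ∧ HasDerivAt α (N (α s)) s := by
      filter_upwards [hαΩ, Ioo_mem_nhds (by linarith : (0 : ℝ) - ε' < 0)
        (by linarith : (0 : ℝ) < 0 + ε')] with s h1 h2
      exact ⟨h1, hαd s h2⟩
    have hder1 : HasDerivAt (fun s => φ (α s)) (dφds p) 0 := hdφds p hp α hα0 hαev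
    have hαd0 : HasDerivAt α ν 0 := by
      have h3 := hαd 0 h0mem
      rwa [hα0] at h3
    have hder2 : HasDerivAt (fun s => ‖gradient t (α s)‖⁻¹) (Dψ ν) 0 := by
      have h4 : HasFDerivAt (fun y => ‖gradient t y‖⁻¹) Dψ (α 0) := by rwa [hα0]
      exact h4.comp_hasDerivAt 0 hαd0
    have hφψev : (fun s => ‖gradient t (α s)‖⁻¹) =ᶠ[nhds (0 : ℝ)] fun s => φ (α s) := by
      filter_upwards [hαΩ] with s hs
      exact ((keyΩ _ hs).2.2.1).symm
    have hdφdseq : dφds p = Dψ ν :=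
      (hder1.congr_of_eventuallyEq hφψev).unique hder2
    -- the constancy hypothesis at p
    have hq2 : q.2 ∈ Set.Ioo (-ε) ε := by rw [hS] at hq; exact hq.2
    have hτq : τ₀ = q.2 := by rw [hτ₀, ← hpq, ht q hq]
    have hconst' : dφds p + m * H p * φ p = c τ₀ := by
      have h5 := hconst q.2 hq2 q.1
      rw [Prod.mk.eta, hpq] at h5
      rw [hτq]
      exact h5
    -- mean curvature and the trace of DN
    haveI : Fact (Module.finrank ℝ (EuclideanSpace ℝ (Fin (m + 1))) = m + 1) :=
      ⟨finrank_euclideanSpace_fin⟩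
    have hν0 : ν ≠ 0 := by
      intro h; rw [h, norm_zero] at hνnorm; exact one_ne_zero hνnorm.symm
    set ob := OrthonormalBasis.fromOrthogonalSpanSingleton (𝕜 := ℝ) m hν0 with hob
    set b : Fin m → EuclideanSpace ℝ (Fin (m + 1)) := fun i => (ob i : _) with hb
    have hbON : Orthonormal ℝ b := by
      rw [orthonormal_iff_ite]
      intro i j
      have h6 := orthonormal_iff_ite.mp ob.orthonormal i j
      rwa [Submodule.coe_inner] at h6
    have hbperp : ∀ i, ⟪b i, ν⟫_ℝ = 0 := by
      intro i
      have hmem : (b i : EuclideanSpace ℝ (Fin (m + 1))) ∈ (ℝ ∙ ν)ᗮ := (ob i).2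
      have := (Submodule.mem_orthogonal _ _).mp hmem ν (Submodule.mem_span_singleton_self ν)
      rwa [real_inner_comm] at this
    set v : Fin (m + 1) → EuclideanSpace ℝ (Fin (m + 1)) := Fin.snoc b ν with hvdef
    have hvON : Orthonormal ℝ v := by
      rw [orthonormal_iff_ite]
      intro i j
      refine Fin.lastCases ?_ (fun i' => ?_) i
      · refine Fin.lastCases ?_ (fun j' => ?_) j
        · simp only [hvdef, Fin.snoc_last]
          rw [real_inner_self_eq_norm_mul_norm, hνnorm, one_mul]
          simp
        · simp only [hvdef, Fin.snoc_last, Fin.snoc_castSucc]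
          rw [if_neg (by exact (Fin.castSucc_lt_last j').ne'), real_inner_comm]
          exact hbperp j'
      · refine Fin.lastCases ?_ (fun j' => ?_) j
        · simp only [hvdef, Fin.snoc_last, Fin.snoc_castSucc]
          rw [if_neg (by exact (Fin.castSucc_lt_last i').ne)]
          exact hbperp i'
        · simp only [hvdef, Fin.snoc_castSucc]
          rw [orthonormal_iff_ite.mp hbON i' j']
          simp [Fin.castSucc_inj]
    have hcard : Fintype.card (Fin (m + 1)) =
        Module.finrank ℝ (EuclideanSpace ℝ (Fin (m + 1))) := by
      simp [finrank_euclideanSpace_fin]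
    set vb := basisOfOrthonormalOfCardEqFinrank hvON hcard with hvb
    have hvbcoe : ⇑vb = v := coe_basisOfOrthonormalOfCardEqFinrank _ _
    set OB := vb.toOrthonormalBasis (by rwa [hvbcoe]) with hOB
    have hOBapp : ∀ k, OB k = v k := by
      intro k
      rw [hOB]
      rw [show ⇑(vb.toOrthonormalBasis (by rwa [hvbcoe])) = ⇑vb from
        Module.Basis.coe_toOrthonormalBasis _ _]
      rw [hvbcoe]
    -- ⟪DN w, ν⟫ = 0
    have hNN : (fun _ : EuclideanSpace ℝ (Fin (m + 1)) => (1 : ℝ)) =ᶠ[nhds p]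
        fun y => ⟪N y, N y⟫_ℝ := by
      filter_upwards [evΩ] with y hy
      have h4 := (keyΩ y hy).2.2.2.1
      have hgy : gradient t y ≠ 0 := (keyΩ y hy).2.1
      have hny : ‖N y‖ = 1 := by
        rw [h4, norm_smul, Real.norm_eq_abs,
          abs_of_pos (inv_pos.mpr (norm_pos_iff.mpr hgy)),
          inv_mul_cancel₀ (norm_ne_zero_iff.mpr hgy)]
      rw [real_inner_self_eq_norm_mul_norm, hny, one_mul]
    have hDNν : ∀ w, ⟪DN w, ν⟫_ℝ = 0 := by
      intro w
      have h1 : HasFDerivAt (fun y => ⟪N y, N y⟫_ℝ)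
          ((fderivInnerCLM ℝ (N p, N p)).comp (DN.prod DN)) p := hNfd.inner ℝ hNfd
      have h3 : ((fderivInnerCLM ℝ (N p, N p)).comp (DN.prod DN)) =
          (0 : EuclideanSpace ℝ (Fin (m + 1)) →L[ℝ] ℝ) :=
        (h1.congr_of_eventuallyEq hNN).unique (hasFDerivAt_const 1 p)
      have h4 := congrArg (fun (A : EuclideanSpace ℝ (Fin (m + 1)) →L[ℝ] ℝ) => A w) h3
      simp only [ContinuousLinearMap.coe_comp', Function.comp_apply,
        ContinuousLinearMap.prod_apply, fderivInnerCLM_apply,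
        ContinuousLinearMap.zero_apply] at h4
      rw [real_inner_comm (N p) (DN w)] at h4
      have h5 : ⟪N p, DN w⟫_ℝ = 0 := by linarith
      rw [hν, real_inner_comm]
      exact h5
    have hHp : H p = -(∑ i, ⟪DN (b i), b i⟫_ℝ) / m :=
      hH p hp b hbON (fun i => by rw [← hν]; exact hbperp i)
    have hsumb : ∑ i, ⟪DN (b i), b i⟫_ℝ = -(m * H p) := by
      rw [hHp]
      field_simp
    -- trace over the standard basis
    have htr : ∑ i, ⟪DN (EuclideanSpace.single i (1 : ℝ)), EuclideanSpace.single i (1 : ℝ)⟫_ℝ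
        = -(m * H p) := by
      have h1 : ∑ i, ⟪DN ((EuclideanSpace.basisFun (Fin (m + 1)) ℝ) i),
          (EuclideanSpace.basisFun (Fin (m + 1)) ℝ) i⟫_ℝ = ∑ k, ⟪DN (OB k), OB k⟫_ℝ :=
        trace_sum_eq DN OB (EuclideanSpace.basisFun (Fin (m + 1)) ℝ)
      have h2 : ∑ k, ⟪DN (OB k), OB k⟫_ℝ = -(m * H p) := by
        rw [Fin.sum_univ_castSucc]
        have h3 : ∀ i' : Fin m, OB i'.castSucc = b i' := by
          intro i'; rw [hOBapp, hvdef, Fin.snoc_castSucc]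
        have h4 : OB (Fin.last m) = ν := by rw [hOBapp, hvdef, Fin.snoc_last]
        rw [h4]
        rw [Finset.sum_congr rfl fun i' _ => by rw [h3 i']]
        rw [hsumb, hDNν ν, add_zero]
      rw [← h2, ← h1]
      exact Finset.sum_congr rfl fun i _ => by rw [EuclideanSpace.basisFun_apply]
    -- the scalar factor h and the field G
    set hsc : EuclideanSpace ℝ (Fin (m + 1)) → ℝ := fun y => deriv u (t y) * ‖gradient t y‖
      with hhsc
    have hhfd : HasFDerivAt hsc (u1 • D2 + r • (u2 • fderiv ℝ t p)) p := hD1.mul hD2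
    set Dh := u1 • D2 + r • (u2 • fderiv ℝ t p) with hDh
    have hGev : (fun y => hsc y • N y) =ᶠ[nhds p] fun y => gradient (fun z => u (t z)) y := by
      filter_upwards [evΩ] with y hy
      have hgy : gradient t y ≠ 0 := (keyΩ y hy).2.1
      have hgny : ‖gradient t y‖ ≠ 0 := norm_ne_zero_iff.mpr hgy
      rw [hgradcomp y hy, (keyΩ y hy).2.2.2.1, hhsc, smul_smul]
      congr 1
      field_simp
    have hGfd : HasFDerivAt (fun y => gradient (fun z => u (t z)) y)
        (hsc p • DN + Dh.smulRight (N p)) p :=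
      (hhfd.smul hNfd).congr_of_eventuallyEq hGev.symm
    have hfderivG : fderiv ℝ (gradient fun y => u (t y)) p = hsc p • DN + Dh.smulRight ν :=
      hGfd.fderiv
    -- assemble
    have hhp : hsc p = u1 * r := rfl
    have hDhν : Dh ν = u1 * D2 ν + r * (u2 * r) := by
      rw [hDh]
      simp only [ContinuousLinearMap.add_apply, ContinuousLinearMap.coe_smul',
        Pi.smul_apply, smul_eq_mul]
      rw [hdtν]
    show lap (fun y => u (t y)) p = 0
    rw [lap, hfderivG]
    simp only [ContinuousLinearMap.add_apply, ContinuousLinearMap.coe_smul',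
      Pi.smul_apply, ContinuousLinearMap.smulRight_apply, inner_add_left,
      real_inner_smul_left, smul_eq_mul]
    rw [Finset.sum_add_distrib]
    have hterm1 : ∑ i, hsc p * ⟪DN (EuclideanSpace.single i (1 : ℝ)),
        EuclideanSpace.single i (1 : ℝ)⟫_ℝ = hsc p * -(m * H p) := by
      rw [← Finset.mul_sum, htr]
    have hterm2 : ∑ i, Dh (EuclideanSpace.single i (1 : ℝ)) *
        ⟪ν, EuclideanSpace.single i (1 : ℝ)⟫_ℝ = Dh ν := by
      have hsum := (EuclideanSpace.basisFun (Fin (m + 1)) ℝ).sum_repr ν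
      calc ∑ i, Dh (EuclideanSpace.single i (1 : ℝ)) * ⟪ν, EuclideanSpace.single i (1 : ℝ)⟫_ℝ
          = ∑ i, ν i • Dh (EuclideanSpace.single i (1 : ℝ)) := by
            refine Finset.sum_congr rfl fun i _ => ?_
            rw [EuclideanSpace.inner_single_right]
            simp [smul_eq_mul]
            ring
        _ = ∑ i, Dh (ν i • EuclideanSpace.single i (1 : ℝ)) := by
            refine Finset.sum_congr rfl fun i _ => ?_
            rw [map_smul]
        _ = Dh (∑ i, ν i • EuclideanSpace.single i (1 : ℝ)) := (map_sum Dh _ _).symm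
        _ = Dh ν := by
            congr 1
            calc ∑ i, ν i • EuclideanSpace.single i (1 : ℝ)
                = ∑ i, ((EuclideanSpace.basisFun (Fin (m + 1)) ℝ).repr ν i)
                  • (EuclideanSpace.basisFun (Fin (m + 1)) ℝ) i := by
                  refine Finset.sum_congr rfl fun i _ => ?_
                  rw [EuclideanSpace.basisFun_repr, EuclideanSpace.basisFun_apply]
              _ = ν := hsum
    rw [hterm1, hterm2, hDhν, hD2Dψ, ← hdφdseq]
    have hdval : dφds p = c τ₀ - m * H p * r⁻¹ := by
      have h6 := hconst'
      rw [hφp] at h6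
      linarith [h6]
    rw [hdval, hhp, hu2eq]
    field_simp
    ring
  refine ⟨part1, part2, ?_, ?_⟩
  · intro τ hτ
    exact ⟨u τ, level τ hτ⟩
  · rintro k ⟨p, hpmem⟩
    simp only [Set.mem_setOf_eq] at hpmem
    obtain ⟨hpΩ, hk⟩ := hpmem
    have hpΩ' := hpΩ
    rw [hΩ] at hpΩ'
    obtain ⟨⟨x, τ'⟩, hqS, rfl⟩ := hpΩ'
    have hτ' : τ' ∈ Set.Ioo (-ε) ε := by rw [hS] at hqS; exact hqS.2
    have htp : t (Φ (x, τ')) = τ' := ht _ hqS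
    rw [htp] at hk
    refine ⟨τ', hτ', ?_⟩
    rw [← hk]
    exact level τ' hτ'
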